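/- Key step of Proposition 2 (bounded case): from equality of heat semigroups to equality of wave propagators. Let H₁, H₂ be complex Hilbert spaces, A_j a bounded selfadjoint nonnegative linear operator on H_j for j = 1,2, D a complex Banach space, and B_j : H_j → D a bounded linear operator. Let f₁ ∈ H₁ and f₂ ∈ H₂. If B₁ e^{−tA₁} f₁ = B₂ e^{−tA₂} f₂ for every t > 0, then B₁ S(τ, A₁) f₁ = B₂ S(τ, A₂) f₂ for every τ > 0. -/

import Mathlib

set_option maxHeartbeats 1000000


open Set MeasureTheory Real

/-- `S(τ, A)`: the continuous functional calculus of `A` applied to the continuous function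
`x ↦ sin(τ√x)/√x` on `[0,∞)`, extended by its limiting value `τ` at `x = 0`. -/
noncomputable def waveKernel {H : Type*} [NormedAddCommGroup H] [InnerProductSpace ℂ H]
    [CompleteSpace H] (τ : ℝ) (A : H →L[ℂ] H) : H →L[ℂ] H :=
  cfc (fun x : ℝ => if x = 0 then τ else Real.sin (τ * Real.sqrt x) / Real.sqrt x) A

/-- `e^{−tA}`: the continuous functional calculus of `A` applied to `x ↦ e^{−tx}`. -/
noncomputable def heatOp {H : Type*} [NormedAddCommGroup H] [InnerProductSpace ℂ H]
    [CompleteSpace H] (t : ℝ) (A : H →L[ℂ] H) : H →L[ℂ] H :=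
  cfc (fun x : ℝ => Real.exp (-(t * x))) A

open Filter Topology

/-! ### Auxiliary lemmas -/

private lemma sinc_cont (τ : ℝ) :
    Continuous (fun y : ℝ => if y = 0 then τ else Real.sin (τ * y) / y) := by
  rw [continuous_iff_continuousAt]
  intro y₀
  rcases eq_or_ne y₀ 0 with rfl | hy
  · have h : HasDerivAt (fun y : ℝ => Real.sin (τ * y)) τ 0 := by
      simpa [Function.comp_def] using (Real.hasDerivAt_sin (τ * 0)).comp 0 ((hasDerivAt_id (0 : ℝ)).const_mul τ)
    have h2 : Tendsto (fun y : ℝ => Real.sin (τ * y) / y) (𝓝[≠] 0) (𝓝 τ) := by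
      have h2' := hasDerivAt_iff_tendsto_slope.mp h
      convert h2' using 2 with y
      simp [slope_def_field]
    have h3 : Tendsto (fun y : ℝ => if y = 0 then τ else Real.sin (τ * y) / y) (𝓝[≠] 0) (𝓝 τ) := by
      refine h2.congr' ?_
      filter_upwards [self_mem_nhdsWithin] with y hy
      simp only [Set.mem_compl_iff, Set.mem_singleton_iff] at hy
      rw [if_neg hy]
    rw [ContinuousAt]
    have h5 : (if (0 : ℝ) = 0 then τ else Real.sin (τ * 0) / 0) = τ := by norm_num
    rw [h5, ← nhdsNE_sup_pure (0 : ℝ)]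
    refine Tendsto.sup h3 ?_
    have h4 := tendsto_pure_nhds (fun y : ℝ => if y = 0 then τ else Real.sin (τ * y) / y) 0
    simpa using h4
  · have hc : ContinuousAt (fun y : ℝ => Real.sin (τ * y) / y) y₀ :=
      ContinuousAt.div (by fun_prop) continuousAt_id hy
    refine hc.congr ?_
    filter_upwards [eventually_ne_nhds hy] with y hy'
    simp [if_neg hy']

private lemma waveFn_contOn (τ : ℝ) :
    ContinuousOn (fun x : ℝ => if x = 0 then τ else Real.sin (τ * Real.sqrt x) / Real.sqrt x)
      (Ici (0 : ℝ)) := by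
  have h := ((sinc_cont τ).comp Real.continuous_sqrt).continuousOn (s := Ici (0 : ℝ))
  refine h.congr ?_
  intro x hx
  by_cases h0 : x = 0
  · subst h0; simp [Function.comp]
  · have hx0 : 0 < x := lt_of_le_of_ne hx (Ne.symm h0)
    have hs : Real.sqrt x ≠ 0 := ne_of_gt (Real.sqrt_pos.mpr hx0)
    simp [Function.comp, h0, hs]

private lemma spec_subset_Icc {H : Type*} [NormedAddCommGroup H] [InnerProductSpace ℂ H]
    [CompleteSpace H] (A : H →L[ℂ] H) (hA : A.IsPositive) {a : ℝ} (haA : ‖A‖ ≤ a) :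
    spectrum ℝ A ⊆ Icc 0 a := by
  intro x hx
  refine ⟨spectrum_nonneg_of_nonneg ((ContinuousLinearMap.nonneg_iff_isPositive A).2 hA) hx, ?_⟩
  have h1 := spectrum.subset_closedBall_norm_mul A hx
  simp only [Metric.mem_closedBall, dist_zero_right, Real.norm_eq_abs] at h1
  calc x ≤ |x| := le_abs_self x
  _ ≤ ‖A‖ * ‖(1 : H →L[ℂ] H)‖ := h1
  _ ≤ ‖A‖ * 1 :=
      mul_le_mul_of_nonneg_left (ContinuousLinearMap.norm_id_le (E := H) (𝕜 := ℂ)) (norm_nonneg _)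
  _ = ‖A‖ := mul_one _
  _ ≤ a := haA

/-- The operator obtained from a continuous function on `[0, a]` via the cfc. -/
private noncomputable def opOf {H : Type*} [NormedAddCommGroup H] [InnerProductSpace ℂ H]
    [CompleteSpace H] {a : ℝ} (ha : (0 : ℝ) ≤ a) (g : C(Icc (0 : ℝ) a, ℝ))
    (A : H →L[ℂ] H) : H →L[ℂ] H :=
  cfc (fun x : ℝ => g (projIcc 0 a ha x)) A

private lemma opOf_fun_cont {a : ℝ} (ha : (0 : ℝ) ≤ a) (g : C(Icc (0 : ℝ) a, ℝ)) :
    Continuous (fun x : ℝ => g (projIcc 0 a ha x)) :=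
  g.continuous.comp (continuous_projIcc)

private lemma opOf_norm_le {H : Type*} [NormedAddCommGroup H] [InnerProductSpace ℂ H]
    [CompleteSpace H] {a : ℝ} (ha : (0 : ℝ) ≤ a) (g : C(Icc (0 : ℝ) a, ℝ))
    (A : H →L[ℂ] H) : ‖opOf ha g A‖ ≤ ‖g‖ :=
  norm_cfc_le (norm_nonneg g) fun x _ => g.norm_coe_le_norm _

private lemma opOf_add {H : Type*} [NormedAddCommGroup H] [InnerProductSpace ℂ H]
    [CompleteSpace H] {a : ℝ} (ha : (0 : ℝ) ≤ a) (g h : C(Icc (0 : ℝ) a, ℝ))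
    (A : H →L[ℂ] H) (hA : IsSelfAdjoint A) :
    opOf ha (g + h) A = opOf ha g A + opOf ha h A := by
  unfold opOf
  simp only [ContinuousMap.add_apply]
  exact cfc_add A _ _ ((opOf_fun_cont ha g).continuousOn) ((opOf_fun_cont ha h).continuousOn)

private lemma opOf_smul {H : Type*} [NormedAddCommGroup H] [InnerProductSpace ℂ H]
    [CompleteSpace H] {a : ℝ} (ha : (0 : ℝ) ≤ a) (c : ℝ) (g : C(Icc (0 : ℝ) a, ℝ))
    (A : H →L[ℂ] H) (hA : IsSelfAdjoint A) :
    opOf ha (c • g) A = c • opOf ha g A := by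
  unfold opOf
  simp only [ContinuousMap.smul_apply, smul_eq_mul]
  exact cfc_smul c _ A ((opOf_fun_cont ha g).continuousOn)

private lemma opOf_eq_cfc {H : Type*} [NormedAddCommGroup H] [InnerProductSpace ℂ H]
    [CompleteSpace H] {a : ℝ} (ha : (0 : ℝ) ≤ a) (g : C(Icc (0 : ℝ) a, ℝ))
    (A : H →L[ℂ] H) (hspec : spectrum ℝ A ⊆ Icc 0 a) (f : ℝ → ℝ)
    (hfg : ∀ x (hx : x ∈ Icc (0 : ℝ) a), g ⟨x, hx⟩ = f x) :
    opOf ha g A = cfc f A := by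
  refine cfc_congr fun x hx => ?_
  have hx' : x ∈ Icc (0 : ℝ) a := hspec hx
  rw [projIcc_of_mem ha hx']
  exact hfg x hx'

private lemma heat_tendsto {H : Type*} [NormedAddCommGroup H] [InnerProductSpace ℂ H]
    [CompleteSpace H] (A : H →L[ℂ] H) (hA : A.IsPositive) (f : H) :
    Tendsto (fun t : ℝ => heatOp t A f) (𝓝[>] (0 : ℝ)) (𝓝 f) := by
  have hsa : IsSelfAdjoint A := hA.isSelfAdjoint
  have hspec : spectrum ℝ A ⊆ Icc 0 ‖A‖ := spec_subset_Icc A hA le_rfl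
  rw [tendsto_iff_norm_sub_tendsto_zero]
  have key : ∀ t : ℝ, 0 < t → ‖heatOp t A f - f‖ ≤ (1 - Real.exp (-(t * ‖A‖))) * ‖f‖ := by
    intro t ht
    have h1 : cfc (fun x : ℝ => Real.exp (-(t * x)) - 1) A = heatOp t A - 1 := by
      rw [cfc_sub (fun x : ℝ => Real.exp (-(t * x))) (fun _ : ℝ => 1) A (by fun_prop)
        (by fun_prop), cfc_const_one ℝ A hsa]
      rfl
    have h2 : ‖heatOp t A - 1‖ ≤ 1 - Real.exp (-(t * ‖A‖)) := by
      rw [← h1]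
      refine norm_cfc_le ?_ ?_
      · have : Real.exp (-(t * ‖A‖)) ≤ 1 := by
          rw [Real.exp_le_one_iff]
          exact neg_nonpos.mpr (mul_nonneg ht.le (norm_nonneg A))
        linarith
      · intro x hx
        obtain ⟨hx0, hxA⟩ := hspec hx
        have he1 : Real.exp (-(t * x)) ≤ 1 := by
          rw [Real.exp_le_one_iff]
          exact neg_nonpos.mpr (mul_nonneg ht.le hx0)
        have he2 : Real.exp (-(t * ‖A‖)) ≤ Real.exp (-(t * x)) := by
          apply Real.exp_le_exp.mpr
          have : t * x ≤ t * ‖A‖ := mul_le_mul_of_nonneg_left hxA ht.le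
          linarith
        rw [Real.norm_eq_abs, abs_sub_comm, abs_of_nonneg (by linarith)]
        linarith
    calc ‖heatOp t A f - f‖ = ‖(heatOp t A - 1) f‖ := by
          simp [ContinuousLinearMap.sub_apply]
    _ ≤ ‖heatOp t A - 1‖ * ‖f‖ := (heatOp t A - 1).le_opNorm f
    _ ≤ (1 - Real.exp (-(t * ‖A‖))) * ‖f‖ := mul_le_mul_of_nonneg_right h2 (norm_nonneg f)
  have hb : Tendsto (fun t : ℝ => (1 - Real.exp (-(t * ‖A‖))) * ‖f‖) (𝓝[>] (0 : ℝ)) (𝓝 0) := by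
    have hcont : Continuous fun t : ℝ => (1 - Real.exp (-(t * ‖A‖))) * ‖f‖ := by fun_prop
    have h0 : Tendsto (fun t : ℝ => (1 - Real.exp (-(t * ‖A‖))) * ‖f‖) (𝓝[>] (0 : ℝ))
        (𝓝 ((1 - Real.exp (-(0 * ‖A‖))) * ‖f‖)) :=
      (hcont.tendsto 0).mono_left nhdsWithin_le_nhds
    simpa using h0
  refine squeeze_zero' ?_ ?_ hb
  · filter_upwards with t using norm_nonneg _
  · filter_upwards [self_mem_nhdsWithin] with t ht using key t ht


/-- The exponential function on `[0, a]`. -/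
private noncomputable def expC {a : ℝ} (ha : (0 : ℝ) ≤ a) : C(Icc (0 : ℝ) a, ℝ) :=
  ⟨fun x => Real.exp (-(x : ℝ)), by fun_prop⟩

private lemma opOf_expC_pow {H : Type*} [NormedAddCommGroup H] [InnerProductSpace ℂ H]
    [CompleteSpace H] {a : ℝ} (ha : (0 : ℝ) ≤ a) (n : ℕ) (A : H →L[ℂ] H)
    (hspec : spectrum ℝ A ⊆ Icc 0 a) :
    opOf ha (expC ha ^ n) A = heatOp (n : ℝ) A := by
  refine opOf_eq_cfc ha _ A hspec _ fun x hx => ?_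
  rw [ContinuousMap.pow_apply]
  show (Real.exp (-x)) ^ n = Real.exp (-((n : ℝ) * x))
  rw [← Real.exp_nat_mul]
  ring_nf

private lemma heatOp_zero {H : Type*} [NormedAddCommGroup H] [InnerProductSpace ℂ H]
    [CompleteSpace H] (A : H →L[ℂ] H) (hsa : IsSelfAdjoint A) :
    heatOp (0 : ℝ) A = 1 := by
  unfold heatOp
  rw [show (fun x : ℝ => Real.exp (-((0 : ℝ) * x))) = fun _ : ℝ => (1 : ℝ) by
    funext x; simp]
  exact cfc_const_one ℝ A hsa

/-- The wave kernel function as a continuous map on `[0, a]`. -/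
private noncomputable def waveC {a : ℝ} (ha : (0 : ℝ) ≤ a) (τ : ℝ) : C(Icc (0 : ℝ) a, ℝ) :=
  ⟨(Icc (0 : ℝ) a).restrict
      (fun x : ℝ => if x = 0 then τ else Real.sin (τ * Real.sqrt x) / Real.sqrt x),
    ContinuousOn.restrict ((waveFn_contOn τ).mono Icc_subset_Ici_self)⟩

private lemma opOf_waveC {H : Type*} [NormedAddCommGroup H] [InnerProductSpace ℂ H]
    [CompleteSpace H] {a : ℝ} (ha : (0 : ℝ) ≤ a) (τ : ℝ) (A : H →L[ℂ] H)
    (hspec : spectrum ℝ A ⊆ Icc 0 a) :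
    opOf ha (waveC ha τ) A = waveKernel τ A :=
  opOf_eq_cfc ha _ A hspec _ fun _ _ => rfl

/-- **Key step of Proposition 2 (bounded case):** from equality of heat semigroups to equality of
wave propagators. If `B₁ e^{−tA₁} f₁ = B₂ e^{−tA₂} f₂` for every `t > 0`, then
`B₁ S(τ, A₁) f₁ = B₂ S(τ, A₂) f₂` for every `τ > 0`. -/
theorem heat_to_wave
    {H₁ H₂ : Type*}
    [NormedAddCommGroup H₁] [InnerProductSpace ℂ H₁] [CompleteSpace H₁]
    [NormedAddCommGroup H₂] [InnerProductSpace ℂ H₂] [CompleteSpace H₂]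
    {D : Type*} [NormedAddCommGroup D] [NormedSpace ℂ D]
    (A₁ : H₁ →L[ℂ] H₁) (hA₁ : A₁.IsPositive)
    (A₂ : H₂ →L[ℂ] H₂) (hA₂ : A₂.IsPositive)
    (B₁ : H₁ →L[ℂ] D) (B₂ : H₂ →L[ℂ] D)
    (f₁ : H₁) (f₂ : H₂)
    (heq : ∀ t : ℝ, 0 < t → B₁ (heatOp t A₁ f₁) = B₂ (heatOp t A₂ f₂)) :
    ∀ τ : ℝ, 0 < τ → B₁ (waveKernel τ A₁ f₁) = B₂ (waveKernel τ A₂ f₂) := by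
  intro τ hτ
  have hsa₁ : IsSelfAdjoint A₁ := hA₁.isSelfAdjoint
  have hsa₂ : IsSelfAdjoint A₂ := hA₂.isSelfAdjoint
  set a : ℝ := max ‖A₁‖ ‖A₂‖ with ha_def
  have ha : (0 : ℝ) ≤ a := le_trans (norm_nonneg A₁) (le_max_left _ _)
  have hspec₁ : spectrum ℝ A₁ ⊆ Icc 0 a := spec_subset_Icc A₁ hA₁ (le_max_left _ _)
  have hspec₂ : spectrum ℝ A₂ ⊆ Icc 0 a := spec_subset_Icc A₂ hA₂ (le_max_right _ _)
  -- `B₁ f₁ = B₂ f₂` via the limit `t → 0⁺`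
  have hf0 : B₁ f₁ = B₂ f₂ := by
    have h1 : Tendsto (fun t : ℝ => B₁ (heatOp t A₁ f₁)) (𝓝[>] (0 : ℝ)) (𝓝 (B₁ f₁)) :=
      (B₁.continuous.tendsto f₁).comp (heat_tendsto A₁ hA₁ f₁)
    have h2 : Tendsto (fun t : ℝ => B₂ (heatOp t A₂ f₂)) (𝓝[>] (0 : ℝ)) (𝓝 (B₂ f₂)) :=
      (B₂.continuous.tendsto f₂).comp (heat_tendsto A₂ hA₂ f₂)
    have h1' : Tendsto (fun t : ℝ => B₂ (heatOp t A₂ f₂)) (𝓝[>] (0 : ℝ)) (𝓝 (B₁ f₁)) := by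
      refine h1.congr' ?_
      filter_upwards [self_mem_nhdsWithin] with t ht using heq t ht
    exact tendsto_nhds_unique h1' h2
  -- the linear functional `Φ`
  let Φlin : C(Icc (0 : ℝ) a, ℝ) →ₗ[ℝ] D :=
    { toFun := fun g => B₁ (opOf ha g A₁ f₁) - B₂ (opOf ha g A₂ f₂)
      map_add' := by
        intro g h
        simp only [opOf_add ha g h A₁ hsa₁, opOf_add ha g h A₂ hsa₂,
          ContinuousLinearMap.add_apply, map_add]
        abel
      map_smul' := by
        intro c g
        simp only [opOf_smul ha c g A₁ hsa₁, opOf_smul ha c g A₂ hsa₂,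
          ContinuousLinearMap.smul_apply, ContinuousLinearMap.map_smul_of_tower,
          RingHom.id_apply, smul_sub] }
  have hbound : ∀ g : C(Icc (0 : ℝ) a, ℝ),
      ‖Φlin g‖ ≤ (‖B₁‖ * ‖f₁‖ + ‖B₂‖ * ‖f₂‖) * ‖g‖ := by
    intro g
    have h1 : ‖B₁ (opOf ha g A₁ f₁)‖ ≤ ‖B₁‖ * ‖f₁‖ * ‖g‖ := by
      calc ‖B₁ (opOf ha g A₁ f₁)‖ ≤ ‖B₁‖ * ‖opOf ha g A₁ f₁‖ := B₁.le_opNorm _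
      _ ≤ ‖B₁‖ * (‖opOf ha g A₁‖ * ‖f₁‖) :=
          mul_le_mul_of_nonneg_left ((opOf ha g A₁).le_opNorm f₁) (norm_nonneg _)
      _ ≤ ‖B₁‖ * (‖g‖ * ‖f₁‖) := by
          refine mul_le_mul_of_nonneg_left ?_ (norm_nonneg _)
          exact mul_le_mul_of_nonneg_right (opOf_norm_le ha g A₁) (norm_nonneg _)
      _ = ‖B₁‖ * ‖f₁‖ * ‖g‖ := by ring
    have h2 : ‖B₂ (opOf ha g A₂ f₂)‖ ≤ ‖B₂‖ * ‖f₂‖ * ‖g‖ := by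
      calc ‖B₂ (opOf ha g A₂ f₂)‖ ≤ ‖B₂‖ * ‖opOf ha g A₂ f₂‖ := B₂.le_opNorm _
      _ ≤ ‖B₂‖ * (‖opOf ha g A₂‖ * ‖f₂‖) :=
          mul_le_mul_of_nonneg_left ((opOf ha g A₂).le_opNorm f₂) (norm_nonneg _)
      _ ≤ ‖B₂‖ * (‖g‖ * ‖f₂‖) := by
          refine mul_le_mul_of_nonneg_left ?_ (norm_nonneg _)
          exact mul_le_mul_of_nonneg_right (opOf_norm_le ha g A₂) (norm_nonneg _)
      _ = ‖B₂‖ * ‖f₂‖ * ‖g‖ := by ring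
    calc ‖Φlin g‖ ≤ ‖B₁ (opOf ha g A₁ f₁)‖ + ‖B₂ (opOf ha g A₂ f₂)‖ := norm_sub_le _ _
    _ ≤ ‖B₁‖ * ‖f₁‖ * ‖g‖ + ‖B₂‖ * ‖f₂‖ * ‖g‖ := add_le_add h1 h2
    _ = (‖B₁‖ * ‖f₁‖ + ‖B₂‖ * ‖f₂‖) * ‖g‖ := by ring
  let Φ : C(Icc (0 : ℝ) a, ℝ) →L[ℝ] D := Φlin.mkContinuous _ hbound
  have hΦapp : ∀ g : C(Icc (0 : ℝ) a, ℝ),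
      Φ g = B₁ (opOf ha g A₁ f₁) - B₂ (opOf ha g A₂ f₂) := fun g => rfl
  -- `Φ` vanishes on powers of `expC ha`
  have hpow : ∀ n : ℕ, Φ (expC ha ^ n) = 0 := by
    intro n
    rw [hΦapp, opOf_expC_pow ha n A₁ hspec₁, opOf_expC_pow ha n A₂ hspec₂]
    rcases Nat.eq_zero_or_pos n with rfl | hn
    · rw [Nat.cast_zero, heatOp_zero A₁ hsa₁, heatOp_zero A₂ hsa₂]
      simpa using sub_eq_zero.mpr hf0
    · exact sub_eq_zero.mpr (heq (n : ℝ) (by exact_mod_cast hn))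
  -- `Φ` vanishes on the subalgebra generated by `expC ha`
  have hadj : ∀ g ∈ Algebra.adjoin ℝ ({expC ha} : Set C(Icc (0 : ℝ) a, ℝ)), Φ g = 0 := by
    intro g hg
    rw [Algebra.adjoin_singleton_eq_range_aeval, AlgHom.mem_range] at hg
    obtain ⟨p, rfl⟩ := hg
    induction p using Polynomial.induction_on' with
    | add p q hp hq => rw [map_add, map_add, hp, hq, add_zero]
    | monomial n c =>
        rw [Polynomial.aeval_monomial, ← Algebra.smul_def, Φ.map_smul, hpow n, smul_zero]
  -- Stone–Weierstrass
  have hsep : (Algebra.adjoin ℝ ({expC ha} : Set C(Icc (0 : ℝ) a, ℝ))).SeparatesPoints := by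
    intro x y hxy
    refine ⟨_, ⟨expC ha, Algebra.subset_adjoin (Set.mem_singleton _), rfl⟩, ?_⟩
    show Real.exp (-(x : ℝ)) ≠ Real.exp (-(y : ℝ))
    intro h
    exact hxy (Subtype.ext (neg_injective (Real.exp_eq_exp.mp h)))
  have htop := ContinuousMap.subalgebra_topologicalClosure_eq_top_of_separatesPoints _ hsep
  have hZ : ∀ g : C(Icc (0 : ℝ) a, ℝ), Φ g = 0 := by
    intro g
    have hgmem : g ∈ closure ((Algebra.adjoin ℝ ({expC ha} : Set C(Icc (0 : ℝ) a, ℝ))) :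
        Set C(Icc (0 : ℝ) a, ℝ)) := by
      have : g ∈ (Algebra.adjoin ℝ ({expC ha} : Set C(Icc (0 : ℝ) a, ℝ))).topologicalClosure := by
        rw [htop]; trivial
      exact this
    have hclosed : IsClosed {g : C(Icc (0 : ℝ) a, ℝ) | Φ g = 0} :=
      isClosed_singleton.preimage Φ.continuous
    exact closure_minimal (fun g hg => hadj g hg) hclosed hgmem
  -- conclusion: apply to the wave kernel function
  have := hZ (waveC ha τ)
  rw [hΦapp, opOf_waveC ha τ A₁ hspec₁, opOf_waveC ha τ A₂ hspec₂] at this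
  exact sub_eq_zero.mp this
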